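/- arXiv:2402.07481 — 2 statements merged into one kernel-verified Lean document; each statement's English description precedes it below -/
import Mathlib

section
/- For every natural number k ≥ 1, the number r_{4k} of roots of t_{4k} in the interval (0, 1) is even if and only if k ≡ 0 (mod 3). -/
open Polynomial Real

noncomputable def t : ℕ → Polynomial ℝ
  | 0 => 2
  | 1 => Polynomial.X
  | (k+2) => Polynomial.X * t (k+1) - t k

noncomputable def r (k : ℕ) : ℕ :=
  Set.ncard {x : ℝ | x ∈ Set.Ioo (0 : ℝ) 1 ∧ (t k).eval x = 0}

lemma t_eval (θ : ℝ) : ∀ m : ℕ, (t m).eval (2 * Real.cos θ) = 2 * Real.cos (m * θ)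
  | 0 => by simp [t]
  | 1 => by simp [t]
  | (m+2) => by
      have h1 := t_eval θ (m+1)
      have h2 := t_eval θ m
      rw [t]
      simp only [Polynomial.eval_sub, Polynomial.eval_mul, Polynomial.eval_X, h1, h2]
      have e1 : ((m:ℝ)+2) * θ = ((m+1) * θ) + θ := by ring
      have e2 : (m:ℝ) * θ = ((m+1) * θ) - θ := by ring
      push_cast
      rw [e1, e2, Real.cos_add, Real.cos_sub]
      ring

theorem r_four_mul_even_iff (k : ℕ) (hk : 1 ≤ k) :
    Even (r (4 * k)) ↔ k % 3 = 0 := by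
  have hπ : (0:ℝ) < π := Real.pi_pos
  have hk1 : (1:ℝ) ≤ (k:ℝ) := by exact_mod_cast hk
  have hk8 : (0:ℝ) < 8 * k := by nlinarith
  set a : ℕ := (8*k+3)/6 with ha
  set f : ℕ → ℝ := fun j => 2 * Real.cos ((2*j+1)*π/(8*k)) with hf
  have hθmem : ∀ j : ℕ, j < 2*k → (2*(j:ℝ)+1)*π/(8*k) ∈ Set.Icc 0 π := by
    intro j hj
    constructor
    · positivity
    · rw [div_le_iff₀ hk8]
      have : (2*(j:ℝ)+1) ≤ 8*k := by
        have : (j:ℝ) < 2*k := by exact_mod_cast hj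
        nlinarith
      nlinarith
  have key : {x : ℝ | x ∈ Set.Ioo (0:ℝ) 1 ∧ (t (4*k)).eval x = 0}
      = f '' ↑(Finset.Ico a (2*k)) := by
    ext x
    simp only [Set.mem_setOf_eq, Set.mem_image, Finset.coe_Ico, Set.mem_Ico, Set.mem_Ioo]
    constructor
    · rintro ⟨⟨hx0, hx1⟩, hev⟩
      set θ := Real.arccos (x/2) with hθdef
      have hcos : Real.cos θ = x/2 := Real.cos_arccos (by linarith) (by linarith)
      have hθ0 : 0 ≤ θ := Real.arccos_nonneg _
      have hθπ : θ ≤ π := Real.arccos_le_pi _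
      have hθlt : θ < π/2 := by
        by_contra h
        push_neg at h
        have := Real.cos_nonpos_of_pi_div_two_le_of_le h (by linarith)
        linarith
      have hθgt : π/3 < θ := by
        by_contra h
        push_neg at h
        have := Real.cos_le_cos_of_nonneg_of_le_pi hθ0 (by linarith) h
        rw [Real.cos_pi_div_three] at this
        linarith
      have hx : x = 2 * Real.cos θ := by rw [hcos]; ring
      rw [hx, t_eval] at hev
      have hc0 : Real.cos ((4*k : ℕ) * θ) = 0 := by linarith
      rw [Real.cos_eq_zero_iff] at hc0
      obtain ⟨n, hn⟩ := hc0
      have hEq : 4*(k:ℝ)*θ = (2*(n:ℝ)+1)*π/2 := by push_cast at hn ⊢; linarith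
      -- bounds on n
      have hn1 : (8*(k:ℤ)) < 6*n+3 := by
        have h' : (8*(k:ℝ)) * π < (6*(n:ℝ)+3) * π := by nlinarith
        have := (mul_lt_mul_iff_of_pos_right hπ).mp h'
        exact_mod_cast this
      have hn2 : (2*(n:ℤ)+1) < 4*k := by
        have h' : (2*(n:ℝ)+1) * π < (4*(k:ℝ)) * π := by nlinarith
        have := (mul_lt_mul_iff_of_pos_right hπ).mp h'
        exact_mod_cast this
      have hn0 : 0 ≤ n := by omega
      refine ⟨n.toNat, ⟨?_, ?_⟩, ?_⟩
      · have h1 : (8*k : ℤ) < 6*(n.toNat : ℤ)+3 := by rwa [Int.toNat_of_nonneg hn0]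
        have h1' : 8*k < 6*n.toNat+3 := by exact_mod_cast h1
        omega
      · have h2 : (2*(n.toNat : ℤ)+1) < 4*k := by rwa [Int.toNat_of_nonneg hn0]
        have h2' : 2*n.toNat+1 < 4*k := by exact_mod_cast h2
        omega
      · have hjn : ((n.toNat : ℝ)) = (n:ℝ) := by
          exact_mod_cast Int.toNat_of_nonneg hn0
        have hθeq : θ = (2*(n.toNat:ℝ)+1)*π/(8*k) := by
          rw [hjn]
          field_simp
          linarith
        simp only [hf]
        rw [← hθeq, hx]
    · rintro ⟨j, ⟨hja, hjb⟩, rfl⟩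
      have hj1 : 8*k < 6*j+3 := by omega
      have hj2 : 2*j+1 < 4*k := by omega
      have hj1R : (8*(k:ℝ)) < 6*j+3 := by exact_mod_cast hj1
      have hj2R : (2*(j:ℝ)+1) < 4*k := by exact_mod_cast hj2
      set θ := (2*(j:ℝ)+1)*π/(8*k) with hθdef
      have hθgt : π/3 < θ := by
        rw [hθdef, lt_div_iff₀ hk8]
        nlinarith
      have hθlt : θ < π/2 := by
        rw [hθdef, div_lt_iff₀ hk8]
        nlinarith
      have hθ0 : 0 < θ := by positivity
      have hcpos : 0 < Real.cos θ :=
        Real.cos_pos_of_mem_Ioo ⟨by linarith, hθlt⟩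
      have hclt : Real.cos θ < 1/2 := by
        have := Real.strictAntiOn_cos ⟨by positivity, by linarith⟩
          ⟨le_of_lt hθ0, by linarith⟩ hθgt
        rwa [Real.cos_pi_div_three] at this
      refine ⟨⟨by simpa [hf] using hcpos, by simp only [hf]; linarith⟩, ?_⟩
      simp only [hf]
      rw [t_eval]
      have : ((4*k : ℕ) : ℝ) * θ = (2*(j:ℤ)+1)*π/2 := by
        rw [hθdef]
        push_cast
        field_simp
        ring
      rw [this, Real.cos_eq_zero_iff.mpr ⟨(j:ℤ), rfl⟩]
      ring
  have hinj : Set.InjOn f ↑(Finset.Ico a (2*k)) := by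
    intro i hi j hj hij
    simp only [Finset.coe_Ico, Set.mem_Ico] at hi hj
    simp only [hf] at hij
    have h1 : Real.cos ((2*(i:ℝ)+1)*π/(8*k)) = Real.cos ((2*(j:ℝ)+1)*π/(8*k)) := by
      linarith
    have h2 := Real.injOn_cos (hθmem i hi.2) (hθmem j hj.2) h1
    have h3 : (2*(i:ℝ)+1)*π = (2*(j:ℝ)+1)*π := by rwa [div_left_inj' (ne_of_gt hk8)] at h2
    have h4 := mul_right_cancel₀ (ne_of_gt hπ) h3
    exact_mod_cast (by linarith : (i:ℝ) = j)
  have hr : r (4*k) = 2*k - a := by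
    rw [r, key, Set.ncard_image_of_injOn hinj, Set.ncard_coe_finset, Nat.card_Ico]
  rw [hr, Nat.even_sub (by omega)]
  rw [Nat.even_iff, Nat.even_iff]
  omega
end

section
/- For every natural number k ≥ 0, the number r_{2+4k} of roots of t_{2+4k} in the interval (0, 1) is odd if and only if k ≡ 1 (mod 3). -/
open Polynomial Real

lemma t_eval_cos : ∀ (m : ℕ) (θ : ℝ), (t m).eval (2 * Real.cos θ) = 2 * Real.cos (m * θ)
  | 0, θ => by simp [t]
  | 1, θ => by simp [t]
  | (m+2), θ => by
    have h1 := t_eval_cos (m+1) θ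
    have h2 := t_eval_cos m θ
    simp only [t, eval_sub, eval_mul, eval_X, h1, h2]
    push_cast
    have e1 : ((m:ℝ)+2)*θ = (((m:ℝ)+1)*θ) + θ := by ring
    have e2 : (m:ℝ)*θ = (((m:ℝ)+1)*θ) - θ := by ring
    rw [e1, e2, Real.cos_add, Real.cos_sub]
    ring

theorem r_two_add_four_mul_odd_iff (k : ℕ) :
    Odd (r (2 + 4 * k)) ↔ k % 3 = 1 := by
  have hπ := Real.pi_pos
  set m : ℕ := 2 + 4 * k with hm
  have hm0 : (0:ℝ) < m := by positivity
  set f : ℕ → ℝ := fun j => 2 * Real.cos ((2*(j:ℝ)+1) * π / (2*(m:ℝ))) with hf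
  set J : Set ℕ := {j : ℕ | 8*k+2 ≤ 6*j ∧ j ≤ 2*k} with hJ
  -- bounds on θ_j for j ∈ J
  have hbound : ∀ j ∈ J, π/3 < (2*(j:ℝ)+1) * π / (2*(m:ℝ)) ∧
      (2*(j:ℝ)+1) * π / (2*(m:ℝ)) < π/2 := by
    rintro j ⟨hj1, hj2⟩
    have hj1' : (8*(k:ℝ)+2) ≤ 6*(j:ℝ) := by exact_mod_cast hj1
    have hj2' : (j:ℝ) ≤ 2*(k:ℝ) := by exact_mod_cast hj2
    have hmr : (m:ℝ) = 2 + 4*(k:ℝ) := by rw [hm]; push_cast; ring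
    constructor
    · rw [div_lt_div_iff₀ (by norm_num) (by positivity)]
      nlinarith [hπ]
    · rw [div_lt_div_iff₀ (by positivity) (by norm_num)]
      nlinarith [hπ]
  -- set equality
  have hset : {x : ℝ | x ∈ Set.Ioo (0 : ℝ) 1 ∧ (t m).eval x = 0} = f '' J := by
    ext x
    simp only [Set.mem_setOf_eq, Set.mem_Ioo, Set.mem_image]
    constructor
    · rintro ⟨⟨hx0, hx1⟩, hev⟩
      set θ := Real.arccos (x/2) with hθdef
      have hle1 : -1 ≤ x/2 := by linarith
      have hle2 : x/2 ≤ 1 := by linarith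
      have hcos : Real.cos θ = x/2 := Real.cos_arccos hle1 hle2
      have hx : 2 * Real.cos θ = x := by rw [hcos]; ring
      have hθ0 : 0 ≤ θ := Real.arccos_nonneg _
      have hθπ : θ ≤ π := Real.arccos_le_pi _
      -- θ < π/2
      have hθlt : θ < π/2 := by
        by_contra h
        push_neg at h
        have hmem1 : π/2 ∈ Set.Icc (0:ℝ) π := ⟨by positivity, by linarith⟩
        have hmem2 : θ ∈ Set.Icc (0:ℝ) π := ⟨hθ0, hθπ⟩
        have := Real.strictAntiOn_cos.antitoneOn hmem1 hmem2 h
        rw [Real.cos_pi_div_two, hcos] at this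
        linarith
      -- π/3 < θ
      have hθgt : π/3 < θ := by
        by_contra h
        push_neg at h
        have hmem1 : θ ∈ Set.Icc (0:ℝ) π := ⟨hθ0, hθπ⟩
        have hmem2 : π/3 ∈ Set.Icc (0:ℝ) π := ⟨by positivity, by linarith⟩
        have := Real.strictAntiOn_cos.antitoneOn hmem1 hmem2 h
        rw [Real.cos_pi_div_three, hcos] at this
        linarith
      -- cos (m θ) = 0
      have hcz : Real.cos ((m:ℝ) * θ) = 0 := by
        have := t_eval_cos m θ
        rw [hx, hev] at this
        linarith
      rw [Real.cos_eq_zero_iff] at hcz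
      obtain ⟨n, hn⟩ := hcz
      -- derive integer bounds
      have hlow : (m:ℝ) * (π/3) < (2*(n:ℝ)+1) * π / 2 := by
        rw [← hn]
        nlinarith [hθgt]
      have hhigh : (2*(n:ℝ)+1) * π / 2 < (m:ℝ) * (π/2) := by
        rw [← hn]
        nlinarith [hθlt]
      have hlowZ : 2 * (m:ℤ) < 3 * (2*n+1) := by
        have : 2 * (m:ℝ) < 3 * (2*(n:ℝ)+1) := by nlinarith [hπ]
        exact_mod_cast this
      have hhighZ : (2*n+1 : ℤ) < (m:ℤ) := by
        have : (2*(n:ℝ)+1) < (m:ℝ) := by nlinarith [hπ]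
        exact_mod_cast this
      have hn0 : 0 ≤ n := by
        have hmz : (m:ℤ) = 2 + 4*(k:ℤ) := by exact_mod_cast hm
        omega
      refine ⟨n.toNat, ?_, ?_⟩
      · have hjz : ((n.toNat : ℕ) : ℤ) = n := Int.toNat_of_nonneg hn0
        have hmz : (m:ℤ) = 2 + 4*(k:ℤ) := by exact_mod_cast hm
        constructor <;> [skip; skip] <;>
          · zify
            omega
      · have hjr : ((n.toNat : ℕ) : ℝ) = (n:ℝ) := by
          exact_mod_cast Int.toNat_of_nonneg hn0
        rw [hf]
        simp only
        rw [hjr]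
        have hθeq : θ = (2*(n:ℝ)+1) * π / (2*(m:ℝ)) := by
          field_simp at hn ⊢
          linarith
        rw [← hθeq, hx]
    · rintro ⟨j, hjJ, hfj⟩
      obtain ⟨hb1, hb2⟩ := hbound j hjJ
      set θ := (2*(j:ℝ)+1) * π / (2*(m:ℝ)) with hθdef
      have hθ0 : 0 < θ := by positivity
      have hcpos : 0 < Real.cos θ :=
        Real.cos_pos_of_mem_Ioo ⟨by linarith, hb2⟩
      have hclt : Real.cos θ < 1/2 := by
        have hmem1 : π/3 ∈ Set.Icc (0:ℝ) π := ⟨by positivity, by linarith⟩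
        have hmem2 : θ ∈ Set.Icc (0:ℝ) π := ⟨le_of_lt hθ0, by linarith⟩
        have := Real.strictAntiOn_cos hmem1 hmem2 hb1
        rw [Real.cos_pi_div_three] at this
        linarith
      have hev : (t m).eval (2 * Real.cos θ) = 0 := by
        rw [t_eval_cos m θ]
        have : (m:ℝ) * θ = (2*((j:ℤ):ℝ)+1) * π / 2 := by
          rw [hθdef]
          have : (m:ℝ) ≠ 0 := ne_of_gt hm0
          field_simp
          push_cast
          ring
        rw [this, Real.cos_eq_zero_iff.mpr ⟨(j:ℤ), rfl⟩]
        ring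
      rw [← hfj]
      exact ⟨⟨by simp only [hf]; positivity, by simp only [hf]; linarith⟩, hev⟩
  -- injectivity
  have hinj : Set.InjOn f J := by
    intro j1 h1 j2 h2 heq
    obtain ⟨ha1, ha2⟩ := hbound j1 h1
    obtain ⟨hb1, hb2⟩ := hbound j2 h2
    have hc : Real.cos ((2*(j1:ℝ)+1) * π / (2*(m:ℝ))) =
        Real.cos ((2*(j2:ℝ)+1) * π / (2*(m:ℝ))) := by
      have := heq
      simp only [hf] at this
      linarith
    have hmem1 : (2*(j1:ℝ)+1) * π / (2*(m:ℝ)) ∈ Set.Icc (0:ℝ) π :=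
      ⟨by positivity, by linarith⟩
    have hmem2 : (2*(j2:ℝ)+1) * π / (2*(m:ℝ)) ∈ Set.Icc (0:ℝ) π :=
      ⟨by positivity, by linarith⟩
    have := Real.injOn_cos hmem1 hmem2 hc
    have hne : (2*(m:ℝ)) ≠ 0 := by positivity
    have hπne : π ≠ 0 := ne_of_gt hπ
    field_simp at this
    have h : (j1:ℝ) = j2 := by linarith
    exact_mod_cast h
  -- counting
  have hJF : J = ↑(Finset.Ico ((8*k+7)/6) (2*k+1)) := by
    ext j
    simp only [hJ, Set.mem_setOf_eq, Finset.coe_Ico, Set.mem_Ico]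
    omega
  have hr : r (2 + 4 * k) = 2*k+1 - (8*k+7)/6 := by
    rw [r]
    rw [show (2 + 4 * k) = m from rfl, hset, Set.ncard_image_of_injOn hinj, hJF,
      Set.ncard_coe_finset, Nat.card_Ico]
  rw [hr, Nat.odd_iff]
  omega
end
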